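/- Let N, M be positive natural numbers with M ≤ N, and let A21 be a real M × N matrix whose rows a₁, …, a_M are linearly independent, so that Q = A21·A21ᵀ is symmetric positive definite. Let (e₁, …, e_M) be an orthonormal eigenbasis of Q with eigenvalues λᵢ > 0, and for v ∈ ℝ^M set cᵢ = ⟨eᵢ, v⟩, wᵢ = Π_{j ≠ i} λⱼ, and let d_k be the Euclidean distance from the row a_k to the span of the other rows {aⱼ : j ≠ k}. Then ⟨v, Q⁻¹·v⟩ = ( (Σ_{i=1}^{M} wᵢ cᵢ²) / (Σ_{i=1}^{M} wᵢ) ) · Σ_{k=1}^{M} 1/d_k². Consequently the minimum control energy satisfies E = 12·( Σᵢ wᵢcᵢ² / Σᵢ wᵢ )·Σₖ 1/d_k² + ⟨x_d*, x_d*⟩ with v = v₁ = x_nd* − (1/2)A21 x_d*. -/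

import Mathlib

open Matrix Finset

/-- **Segregation of the minimum control energy into task-based and topology-based terms.**
For `A21` with linearly independent rows, Gram matrix `Q = A21·A21ᵀ`, orthonormal
eigenbasis `(eᵢ)` of `Q` with eigenvalues `λᵢ > 0`, coefficients `cᵢ = ⟨eᵢ, v⟩`, weights
`wᵢ = Πⱼ≠ᵢ λⱼ`, and `d_k` the Euclidean distance from the row `a_k` to the span of the
other rows, one has `⟨v, Q⁻¹v⟩ = ((Σᵢ wᵢcᵢ²)/(Σᵢ wᵢ)) · Σₖ 1/d_k²`; consequently the
minimum control energy is `12·((Σᵢ wᵢcᵢ²)/(Σᵢ wᵢ))·Σₖ 1/d_k² + ⟨x_d*, x_d*⟩` when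
`v = v₁ = x_nd* − (1/2)A21 x_d*`. -/
theorem energy_task_topology_segregation
    (N M : ℕ) (hN : 0 < N) (hM : 0 < M) (hMN : M ≤ N)
    (A21 : Matrix (Fin M) (Fin N) ℝ)
    (hrows : LinearIndependent ℝ (fun k => A21 k))
    (Q : Matrix (Fin M) (Fin M) ℝ) (hQ : Q = A21 * A21ᵀ) (hQpd : Q.PosDef)
    (e : Fin M → Fin M → ℝ) (lam : Fin M → ℝ) (hlam : ∀ i, 0 < lam i)
    (horth : ∀ i j, e i ⬝ᵥ e j = if i = j then (1 : ℝ) else 0)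
    (heig : ∀ i, Q.mulVec (e i) = lam i • e i)
    (v : Fin M → ℝ)
    (c : Fin M → ℝ) (hc : ∀ i, c i = e i ⬝ᵥ v)
    (w : Fin M → ℝ) (hw : ∀ i, w i = ∏ j ∈ univ.erase i, lam j)
    (r : Fin M → EuclideanSpace ℝ (Fin N))
    (hr : ∀ k, r k = (WithLp.equiv 2 (Fin N → ℝ)).symm (A21 k))
    (d : Fin M → ℝ)
    (hd : ∀ k, d k = Metric.infDist (r k)
      (Submodule.span ℝ (r '' {j | j ≠ k}) : Set (EuclideanSpace ℝ (Fin N)))) :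
    v ⬝ᵥ Q⁻¹.mulVec v =
      ((∑ i, w i * c i ^ 2) / (∑ i, w i)) * ∑ k, 1 / (d k) ^ 2 ∧
    ∀ (xd : Fin N → ℝ) (xnd : Fin M → ℝ), v = xnd - (1 / 2 : ℝ) • A21.mulVec xd →
      12 * (v ⬝ᵥ Q⁻¹.mulVec v) + xd ⬝ᵥ xd =
        12 * (((∑ i, w i * c i ^ 2) / (∑ i, w i)) * ∑ k, 1 / (d k) ^ 2) + xd ⬝ᵥ xd := by
  classical
  have hQdet : IsUnit Q.det := isUnit_iff_ne_zero.mpr (ne_of_gt hQpd.det_pos)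
  have hQQinv : Q * Q⁻¹ = 1 := Q.mul_nonsing_inv hQdet
  have hQinvpd : Q⁻¹.PosDef := hQpd.inv
  have hdiagpos : ∀ k, 0 < Q⁻¹ k k := by
    intro k
    have hne : (Pi.single k 1 : Fin M → ℝ) ≠ 0 := by
      intro h
      have := congrFun h k
      simp at this
    have := hQinvpd.dotProduct_mulVec_pos hne
    simpa [dotProduct, Matrix.mulVec, Pi.single_apply] using this
  -- inner products of the rows give the Gram matrix
  have hinner_rr : ∀ i j, (inner ℝ (r i) (r j) : ℝ) = Q i j := by
    intro i j
    rw [hr, hr, hQ]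
    simp [PiLp.inner_apply, RCLike.inner_apply, Matrix.mul_apply, Matrix.transpose_apply,
      mul_comm]
  -- the key geometric fact : 1/d_k² = (Q⁻¹)_kk
  have hkey : ∀ k, 1 / (d k) ^ 2 = Q⁻¹ k k := by
    intro k
    set S : Submodule ℝ (EuclideanSpace ℝ (Fin N)) :=
      Submodule.span ℝ (r '' {j | j ≠ k}) with hS
    set y : Fin M → ℝ := fun j => Q⁻¹ j k with hy
    have hyk : 0 < y k := hdiagpos k
    set z : EuclideanSpace ℝ (Fin N) := ∑ j, y j • r j with hz
    have hrz : ∀ i, (inner ℝ (r i) z : ℝ) = if i = k then 1 else 0 := by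
      intro i
      rw [hz, inner_sum]
      have h1 : ∀ j ∈ (univ : Finset (Fin M)),
          (inner ℝ (r i) (y j • r j) : ℝ) = Q i j * y j := by
        intro j _
        rw [real_inner_smul_right, hinner_rr]; ring
      rw [Finset.sum_congr rfl h1]
      have h2 : ∑ j, Q i j * y j = (Q * Q⁻¹) i k := by
        simp [Matrix.mul_apply, hy]
      rw [h2, hQQinv, Matrix.one_apply]
    have hzz : (inner ℝ z z : ℝ) = y k := by
      nth_rewrite 1 [hz]
      rw [sum_inner]
      have h1 : ∀ i ∈ (univ : Finset (Fin M)),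
          (inner ℝ (y i • r i) z : ℝ) = y i * (if i = k then 1 else 0) := by
        intro i _
        rw [real_inner_smul_left, hrz]
      rw [Finset.sum_congr rfl h1]
      simp
    have hzS : ∀ s ∈ S, (inner ℝ z s : ℝ) = 0 := by
      intro s hs
      induction hs using Submodule.span_induction with
      | mem x hx =>
        obtain ⟨j, hj, rfl⟩ := hx
        rw [real_inner_comm, hrz j, if_neg hj]
      | zero => simp
      | add x y' hx hy' ihx ihy => rw [inner_add_right, ihx, ihy, add_zero]
      | smul a x hx ih => rw [real_inner_smul_right, ih, mul_zero]
    -- the orthogonal projection of r k onto S is r k - (y k)⁻¹ • z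
    have hp : r k - (y k)⁻¹ • z ∈ S := by
      have hzsplit : z = y k • r k + ∑ j ∈ univ.erase k, y j • r j := by
        rw [hz]
        exact (Finset.add_sum_erase _ _ (Finset.mem_univ k)).symm
      have heq : r k - (y k)⁻¹ • z = ∑ j ∈ univ.erase k, (-((y k)⁻¹ * y j)) • r j := by
        rw [hzsplit, smul_add, smul_smul, inv_mul_cancel₀ (ne_of_gt hyk), one_smul,
          Finset.smul_sum]
        rw [sub_add_eq_sub_sub, sub_self, zero_sub, ← Finset.sum_neg_distrib]
        exact Finset.sum_congr rfl fun j _ => by rw [smul_smul, neg_smul]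
      rw [heq]
      refine Submodule.sum_smul_mem S _ fun j hj => ?_
      exact Submodule.subset_span ⟨j, (Finset.mem_erase.mp hj).1, rfl⟩
    have hproj : (S.starProjection (r k) : EuclideanSpace ℝ (Fin N))
        = r k - (y k)⁻¹ • z := by
      refine Submodule.eq_starProjection_of_mem_of_inner_eq_zero hp ?_
      intro w' hw'
      have h3 : r k - (r k - (y k)⁻¹ • z) = (y k)⁻¹ • z := by abel
      rw [h3, real_inner_smul_left, hzS w' hw', mul_zero]
    have hdk : d k = ‖(y k)⁻¹ • z‖ := by
      have hmin := Submodule.starProjection_minimal (U := S) (r k)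
      rw [hproj] at hmin
      have h3 : r k - (r k - (y k)⁻¹ • z) = (y k)⁻¹ • z := by abel
      rw [h3] at hmin
      rw [hd k, Metric.infDist_eq_iInf]
      simp_rw [dist_eq_norm]
      exact hmin.symm
    have hd2 : (d k) ^ 2 = (y k)⁻¹ := by
      rw [hdk, ← real_inner_self_eq_norm_sq, real_inner_smul_left, real_inner_smul_right,
        hzz]
      field_simp
    rw [hd2]
    simp [hy]
  -- spectral decomposition via the orthogonal matrix of eigenvectors
  set E : Matrix (Fin M) (Fin M) ℝ := Matrix.of e with hE
  have hEEt : E * Eᵀ = 1 := by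
    ext i j
    have := horth i j
    simpa [Matrix.mul_apply, Matrix.transpose_apply, Matrix.one_apply, dotProduct,
      hE] using this
  have hEtE : Eᵀ * E = 1 := mul_eq_one_comm.mp hEEt
  set D : Matrix (Fin M) (Fin M) ℝ := Matrix.diagonal lam with hD
  set D' : Matrix (Fin M) (Fin M) ℝ := Matrix.diagonal (fun i => (lam i)⁻¹) with hD'
  have hQE : Q * Eᵀ = Eᵀ * D := by
    ext j i
    have h1 : (Q * Eᵀ) j i = (Q *ᵥ e i) j := by
      simp [Matrix.mul_apply, Matrix.mulVec, dotProduct, Matrix.transpose_apply, hE]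
    rw [h1, heig i]
    simp [Matrix.mul_apply, Matrix.transpose_apply, Matrix.diagonal, hE, hD]
    ring
  have hQeq : Q = Eᵀ * D * E := by
    calc Q = Q * (Eᵀ * E) := by rw [hEtE, Matrix.mul_one]
    _ = (Q * Eᵀ) * E := by rw [Matrix.mul_assoc]
    _ = Eᵀ * D * E := by rw [hQE]
  have hDD' : D * D' = 1 := by
    rw [hD, hD', Matrix.diagonal_mul_diagonal]
    have : (fun i => lam i * (lam i)⁻¹) = fun _ => (1 : ℝ) := by
      funext i; exact mul_inv_cancel₀ (ne_of_gt (hlam i))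
    rw [this, Matrix.diagonal_one]
  have hQinv_eq : Q⁻¹ = Eᵀ * D' * E := by
    apply Matrix.inv_eq_right_inv
    rw [hQeq]
    calc Eᵀ * D * E * (Eᵀ * D' * E)
        = Eᵀ * D * (E * Eᵀ) * D' * E := by
          simp only [Matrix.mul_assoc]
    _ = Eᵀ * (D * D') * E := by rw [hEEt, Matrix.mul_one]; simp only [Matrix.mul_assoc]
    _ = Eᵀ * E := by rw [hDD', Matrix.mul_one]
    _ = 1 := hEtE
  have hEv : E *ᵥ v = c := by
    funext i
    rw [hc i]
    simp [Matrix.mulVec, dotProduct, hE]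
  -- quadratic form in eigencoordinates
  have hquad : v ⬝ᵥ Q⁻¹.mulVec v = ∑ i, (lam i)⁻¹ * c i ^ 2 := by
    rw [hQinv_eq, Matrix.mul_assoc, ← Matrix.mulVec_mulVec, Matrix.dotProduct_mulVec,
      Matrix.vecMul_transpose, hEv, ← Matrix.mulVec_mulVec, hEv]
    simp [dotProduct, Matrix.mulVec_diagonal, hD']
    exact Finset.sum_congr rfl fun i _ => by ring
  -- trace of the inverse
  have htrace : ∑ k, Q⁻¹ k k = ∑ i, (lam i)⁻¹ := by
    have h1 : Q⁻¹.trace = (Eᵀ * D' * E).trace := by rw [hQinv_eq]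
    rw [Matrix.trace_mul_cycle, hEEt, Matrix.one_mul, Matrix.trace_diagonal] at h1
    simpa [Matrix.trace, Matrix.diag] using h1
  have hsumd : ∑ k, 1 / (d k) ^ 2 = ∑ i, (lam i)⁻¹ := by
    rw [Finset.sum_congr rfl fun k _ => hkey k]
    exact htrace
  -- the weights
  have hP : ∀ i, w i = (∏ j, lam j) * (lam i)⁻¹ := by
    intro i
    rw [hw i, eq_comm]
    have := Finset.mul_prod_erase univ lam (Finset.mem_univ i)
    rw [← this, mul_comm (lam i) _, mul_assoc, mul_inv_cancel₀ (ne_of_gt (hlam i)), mul_one]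
  have hPpos : 0 < ∏ j, lam j := Finset.prod_pos fun i _ => hlam i
  have hTpos : 0 < ∑ i, (lam i)⁻¹ := by
    refine Finset.sum_pos (fun i _ => inv_pos.mpr (hlam i)) ?_
    exact Finset.univ_nonempty_iff.mpr ⟨⟨0, hM⟩⟩
  have hwsum : ∑ i, w i = (∏ j, lam j) * ∑ i, (lam i)⁻¹ := by
    rw [Finset.sum_congr rfl fun i _ => hP i, ← Finset.mul_sum]
  have hwcsum : ∑ i, w i * c i ^ 2 = (∏ j, lam j) * ∑ i, (lam i)⁻¹ * c i ^ 2 := by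
    rw [Finset.mul_sum]
    exact Finset.sum_congr rfl fun i _ => by rw [hP i]; ring
  have hmain : v ⬝ᵥ Q⁻¹.mulVec v =
      ((∑ i, w i * c i ^ 2) / (∑ i, w i)) * ∑ k, 1 / (d k) ^ 2 := by
    rw [hquad, hsumd, hwsum, hwcsum]
    rw [mul_div_mul_left _ _ (ne_of_gt hPpos)]
    rw [div_mul_cancel₀ _ (ne_of_gt hTpos)]
  exact ⟨hmain, fun xd xnd _ => by rw [hmain]⟩
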